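/- For T admitting an A-adjoint and α ∈ [0,1], ‖T‖_{A,α}² ≥ 2 sqrt(α(1−α)) · w_A(T) · sqrt(c_A(T^{♯A}T)). -/

import Mathlib

open scoped ComplexOrder
open ContinuousLinearMap Filter Topology

variable {H : Type*} [NormedAddCommGroup H] [InnerProductSpace ℂ H] [CompleteSpace H]

/-- The A-semi-inner product `⟨x, y⟩_A = ⟨A x, y⟩` (Mathlib convention: conjugate
linear in the first variable). -/
noncomputable def aInner (A : H →L[ℂ] H) (x y : H) : ℂ := inner ℂ (A x) y

/-- The A-seminorm `‖x‖_A = sqrt ⟨x, x⟩_A`. -/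
noncomputable def aNorm (A : H →L[ℂ] H) (x : H) : ℝ := Real.sqrt (aInner A x x).re

/-- `T` is A-bounded. -/
def ABounded (A T : H →L[ℂ] H) : Prop := ∃ c > 0, ∀ x, aNorm A (T x) ≤ c * aNorm A x

/-- The A-operator seminorm. -/
noncomputable def opNormA (A T : H →L[ℂ] H) : ℝ :=
  sSup {r | ∃ x ∈ closure (Set.range A), aNorm A x = 1 ∧ r = aNorm A (T x)}

/-- The A-numerical radius. -/
noncomputable def wA (A T : H →L[ℂ] H) : ℝ :=
  sSup {r | ∃ x, aNorm A x = 1 ∧ r = ‖aInner A (T x) x‖}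

/-- The A-Crawford number. -/
noncomputable def cA (A T : H →L[ℂ] H) : ℝ :=
  sInf {r | ∃ x, aNorm A x = 1 ∧ r = ‖aInner A (T x) x‖}

/-- The `A_α`-seminorm `‖T‖_{A,α}`. -/
noncomputable def alphaNorm (A T : H →L[ℂ] H) (α : ℝ) : ℝ :=
  sSup {r | ∃ x, aNorm A x = 1 ∧
    r = Real.sqrt (α * ‖aInner A (T x) x‖ ^ 2 + (1 - α) * aNorm A (T x) ^ 2)}

/-- `S` is the A-adjoint `T^{♯_A}` of `T`: the solution of `A X = T* A` whose
range lies in the closure of the range of `A`. -/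
def IsAAdjoint (A T S : H →L[ℂ] H) : Prop :=
  A ∘L S = (ContinuousLinearMap.adjoint T) ∘L A ∧ ∀ x, S x ∈ closure (Set.range A)

set_option linter.unusedSectionVars false

variable {A : H →L[ℂ] H}

lemma aInner_conj (hA : A.IsPositive) (x y : H) :
    (starRingEnd ℂ) (aInner A y x) = aInner A x y := by
  rw [aInner, aInner, inner_conj_symm, ← ContinuousLinearMap.adjoint_inner_left,
    hA.isSelfAdjoint.adjoint_eq]

lemma aInner_self_re_nonneg (hA : A.IsPositive) (x : H) : 0 ≤ (aInner A x x).re :=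
  hA.2 x

noncomputable def aCore (hA : A.IsPositive) : PreInnerProductSpace.Core ℂ H where
  inner x y := aInner A x y
  conj_inner_symm := aInner_conj hA
  re_inner_nonneg := aInner_self_re_nonneg hA
  add_left x y z := by simp [aInner, inner_add_left]
  smul_left x y r := by simp [aInner, inner_smul_left, mul_comm]

lemma aInner_cs (hA : A.IsPositive) (x y : H) :
    ‖aInner A x y‖ ^ 2 ≤ (aInner A x x).re * (aInner A y y).re := by
  have h := InnerProductSpace.Core.inner_mul_inner_self_le (𝕜 := ℂ) (F := H)
    (c := aCore hA) x y
  have h2 : ‖aInner A y x‖ = ‖aInner A x y‖ := by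
    rw [← aInner_conj hA x y]; simp
  have h3 : @inner ℂ H (aCore hA).toInner = aInner A := rfl
  rw [h3] at h
  rw [h2] at h
  calc ‖aInner A x y‖ ^ 2 = ‖aInner A x y‖ * ‖aInner A x y‖ := by
        rw [sq]
    _ ≤ _ := h

lemma aInner_add_smul (A B : H →L[ℂ] H) (x y : H) (c : ℂ) :
    aInner A (B (x + c • y)) (x + c • y) =
      aInner A (B x) x + c * aInner A (B x) y + (starRingEnd ℂ) c * aInner A (B y) x
        + (starRingEnd ℂ) c * c * aInner A (B y) y := by
  simp only [aInner, map_add, map_smul, inner_add_left, inner_add_right,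
    inner_smul_left, inner_smul_right]
  ring

lemma aInner_polar (A B : H →L[ℂ] H) (x y : H) :
    4 * aInner A (B x) y =
      aInner A (B (x + (1:ℂ) • y)) (x + (1:ℂ) • y)
      - aInner A (B (x + (-1:ℂ) • y)) (x + (-1:ℂ) • y)
      - Complex.I * aInner A (B (x + Complex.I • y)) (x + Complex.I • y)
      + Complex.I * aInner A (B (x + (-Complex.I) • y)) (x + (-Complex.I) • y) := by
  rw [aInner_add_smul, aInner_add_smul, aInner_add_smul, aInner_add_smul]
  simp only [map_one, map_neg, Complex.conj_I]
  ring_nf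
  simp only [Complex.I_sq]
  ring

lemma aInner_norm_sum (A : H →L[ℂ] H) (x y : H) :
    aInner A (x + (1:ℂ) • y) (x + (1:ℂ) • y)
      + aInner A (x + (-1:ℂ) • y) (x + (-1:ℂ) • y)
      + aInner A (x + Complex.I • y) (x + Complex.I • y)
      + aInner A (x + (-Complex.I) • y) (x + (-Complex.I) • y)
      = 4 * (aInner A x x + aInner A y y) := by
  have h := fun c => aInner_add_smul A (ContinuousLinearMap.id ℂ H) x y c
  simp only [ContinuousLinearMap.id_apply] at h
  rw [h, h, h, h]
  simp only [map_one, map_neg, Complex.conj_I]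
  ring_nf
  simp only [Complex.I_sq]
  ring

lemma aNorm_sq (hA : A.IsPositive) (x : H) : aNorm A x ^ 2 = (aInner A x x).re :=
  Real.sq_sqrt (hA.2 x)

lemma aNorm_nonneg' (x : H) : 0 ≤ aNorm A x := Real.sqrt_nonneg _

lemma aInner_self_abs (hA : A.IsPositive) (u : H) :
    ‖aInner A u u‖ = (aInner A u u).re := by
  have h : (starRingEnd ℂ) (aInner A u u) = aInner A u u := aInner_conj hA u u
  rw [Complex.conj_eq_iff_re] at h
  rw [← h]
  simpa using Complex.norm_of_nonneg (by rw [← h] at *; simpa using aInner_self_re_nonneg hA u)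

lemma aInner_real_smul (A B : H →L[ℂ] H) (t : ℝ) (u : H) :
    aInner A (B (((t:ℂ)) • u)) ((t:ℂ) • u) = ((t^2 : ℝ) : ℂ) * aInner A (B u) u := by
  simp only [aInner, map_smul, inner_smul_left, inner_smul_right, Complex.conj_ofReal]
  push_cast
  ring

lemma aNorm_real_smul (hA : A.IsPositive) (t : ℝ) (u : H) :
    aNorm A ((t:ℂ) • u) = |t| * aNorm A u := by
  have h := aInner_real_smul A (ContinuousLinearMap.id ℂ H) t u
  simp only [ContinuousLinearMap.id_apply] at h
  rw [aNorm, h, aNorm, Complex.re_ofReal_mul, Real.sqrt_mul (sq_nonneg t),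
    Real.sqrt_sq_eq_abs]

lemma num_bound (hA : A.IsPositive) {T : H →L[ℂ] H} {M : ℝ}
    (hM : ∀ x, aNorm A x = 1 → ‖aInner A (T x) x‖ ≤ M) (u : H) :
    ‖aInner A (T u) u‖ ≤ M * (aInner A u u).re := by
  rcases eq_or_lt_of_le (aNorm_nonneg' u (A := A)) with h0 | h0
  · have hre : (aInner A u u).re = 0 := by
      have h := aNorm_sq hA u
      rw [← h0] at h
      simpa using h.symm
    rw [hre, mul_zero]
    have hcs := aInner_cs hA (T u) u
    rw [hre, mul_zero] at hcs
    have : ‖aInner A (T u) u‖ ^ 2 ≤ 0 := hcs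
    nlinarith [norm_nonneg (aInner A (T u) u)]
  · set t := aNorm A u with ht
    set y := ((t⁻¹ : ℝ) : ℂ) • u with hy
    have hyn : aNorm A y = 1 := by
      rw [hy, aNorm_real_smul hA, abs_of_pos (inv_pos.mpr h0), ← ht,
        inv_mul_cancel₀ (ne_of_gt h0)]
    have h1 := hM y hyn
    have h2 : aInner A (T y) y = (((t⁻¹)^2 : ℝ) : ℂ) * aInner A (T u) u := by
      rw [hy, aInner_real_smul A T]
    rw [h2, norm_mul] at h1
    have h3 : ‖(((t⁻¹)^2 : ℝ) : ℂ)‖ = (t⁻¹)^2 := by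
      rw [Complex.norm_real, Real.norm_eq_abs, abs_of_nonneg (by positivity)]
    rw [h3] at h1
    have hre : (aInner A u u).re = t^2 := (aNorm_sq hA u).symm
    rw [hre]
    have ht2 : (0:ℝ) < t^2 := by positivity
    calc ‖aInner A (T u) u‖
        = t^2 * ((t⁻¹)^2 * ‖aInner A (T u) u‖) := by
          field_simp
      _ ≤ t^2 * M := by
          exact mul_le_mul_of_nonneg_left h1 (le_of_lt ht2)
      _ = M * t^2 := mul_comm _ _

lemma abs_four_comb (a b c d : ℂ) :
    ‖a - b - Complex.I * c + Complex.I * d‖ ≤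
      ‖a‖ + ‖b‖ + ‖c‖ + ‖d‖ := by
  have h1 := norm_add_le (a - b - Complex.I * c) (Complex.I * d)
  have h2 := norm_sub_le (a - b) (Complex.I * c)
  have h3 := norm_sub_le a b
  rw [norm_mul, Complex.norm_I, one_mul] at h1 h2
  linarith

lemma polar_bound (hA : A.IsPositive) {T : H →L[ℂ] H} {M : ℝ}
    (hM2 : ∀ u, ‖aInner A (T u) u‖ ≤ M * (aInner A u u).re) (x y : H) :
    ‖aInner A (T x) y‖ ≤ M * ((aInner A x x).re + (aInner A y y).re) := by
  have hp := aInner_polar A T x y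
  set u1 := x + (1:ℂ) • y with hu1
  set u2 := x + (-1:ℂ) • y with hu2
  set u3 := x + Complex.I • y with hu3
  set u4 := x + (-Complex.I) • y with hu4
  have habs : (4:ℝ) * ‖aInner A (T x) y‖ ≤
      ‖aInner A (T u1) u1‖ + ‖aInner A (T u2) u2‖
      + ‖aInner A (T u3) u3‖ + ‖aInner A (T u4) u4‖ := by
    calc (4:ℝ) * ‖aInner A (T x) y‖
        = ‖4 * aInner A (T x) y‖ := by rw [norm_mul]; norm_num
      _ = ‖aInner A (T u1) u1 - aInner A (T u2) u2
            - Complex.I * aInner A (T u3) u3 + Complex.I * aInner A (T u4) u4‖ := by rw [hp]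
      _ ≤ _ := abs_four_comb _ _ _ _
  have hsum : (aInner A u1 u1).re + (aInner A u2 u2).re + (aInner A u3 u3).re
      + (aInner A u4 u4).re = 4 * ((aInner A x x).re + (aInner A y y).re) := by
    have h := congrArg Complex.re (aInner_norm_sum A x y)
    rw [show ((4:ℂ) * (aInner A x x + aInner A y y)).re
        = 4 * ((aInner A x x).re + (aInner A y y).re) by simp] at h
    simp only [Complex.add_re] at h
    exact h
  have b1 := hM2 u1
  have b2 := hM2 u2
  have b3 := hM2 u3
  have b4 := hM2 u4
  have key : M * ((aInner A u1 u1).re + (aInner A u2 u2).re + (aInner A u3 u3).re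
      + (aInner A u4 u4).re) = 4 * (M * ((aInner A x x).re + (aInner A y y).re)) := by
    rw [hsum]; ring
  linarith

lemma normT_bound (hA : A.IsPositive) {T : H →L[ℂ] H} {M : ℝ}
    (hM2 : ∀ u, ‖aInner A (T u) u‖ ≤ M * (aInner A u u).re)
    (hM0 : 0 ≤ M) {x : H} (hx : aNorm A x = 1) : aNorm A (T x) ≤ 2 * M := by
  set b := aNorm A (T x) with hb
  rcases eq_or_lt_of_le (aNorm_nonneg' (T x) (A := A)) with h0 | h0
  · rw [hb, ← h0]; positivity
  · set y := ((b⁻¹ : ℝ) : ℂ) • (T x) with hy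
    have h := polar_bound hA hM2 x y
    have hxx : (aInner A x x).re = 1 := by
      have := aNorm_sq hA x; rw [hx] at this; simpa using this.symm
    have hTT : (aInner A (T x) (T x)).re = b^2 := (aNorm_sq hA (T x)).symm
    have hyy : (aInner A y y).re = 1 := by
      have h1 : aNorm A y = 1 := by
        rw [hy, aNorm_real_smul hA, abs_of_pos (inv_pos.mpr h0), ← hb,
          inv_mul_cancel₀ (ne_of_gt h0)]
      have := aNorm_sq hA y; rw [h1] at this; simpa using this.symm
    have hval : ‖aInner A (T x) y‖ = b := by
      rw [hy, aInner, inner_smul_right, ← aInner, norm_mul, Complex.norm_real, Real.norm_eq_abs,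
        abs_of_pos (inv_pos.mpr h0), aInner_self_abs hA, hTT]
      field_simp
      ring
    rw [hval, hxx, hyy] at h
    linarith

theorem stmt10 (A T S : H →L[ℂ] H) (hA : A.IsPositive) (hT : IsAAdjoint A T S)
    (α : ℝ) (hα : α ∈ Set.Icc (0:ℝ) 1) :
    alphaNorm A T α ^ 2 ≥
      2 * Real.sqrt (α * (1 - α)) * wA A T * Real.sqrt (cA A (S ∘L T)) := by
  obtain ⟨hα0, hα1⟩ := hα
  set k := Real.sqrt (α * (1 - α)) with hk
  set c := cA A (S ∘L T) with hc
  set w := wA A T with hwdef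
  set L := alphaNorm A T α with hL
  have hL2 : (0:ℝ) ≤ L ^ 2 := sq_nonneg L
  have hk0 : 0 ≤ k := Real.sqrt_nonneg _
  have hsc0 : 0 ≤ Real.sqrt c := Real.sqrt_nonneg _
  by_cases h1 : k = 0 ∨ Real.sqrt c = 0
  · have : 2 * k * w * Real.sqrt c = 0 := by
      rcases h1 with h | h <;> rw [h] <;> ring
    rw [ge_iff_le, this]; exact hL2
  push_neg at h1
  obtain ⟨hkne, hscne⟩ := h1
  have hkpos : 0 < k := lt_of_le_of_ne hk0 (Ne.symm hkne)
  have hscpos : 0 < Real.sqrt c := lt_of_le_of_ne hsc0 (Ne.symm hscne)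
  -- the numerical radius set
  set Wset : Set ℝ := {r | ∃ x, aNorm A x = 1 ∧ r = ‖aInner A (T x) x‖}
    with hWset
  have hwsup : w = sSup Wset := rfl
  by_cases hne : Wset.Nonempty
  swap
  · have hw0 : w = 0 := by
      rw [hwsup, Set.not_nonempty_iff_eq_empty.mp hne, Real.sSup_empty]
    rw [ge_iff_le, hw0]
    simpa using hL2
  by_cases hbdd : BddAbove Wset
  swap
  · have hw0 : w = 0 := by rw [hwsup]; exact Real.sSup_of_not_bddAbove hbdd
    rw [ge_iff_le, hw0]
    simpa using hL2
  have hwle : ∀ r ∈ Wset, r ≤ w := fun r hr => le_csSup hbdd hr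
  have hw0 : 0 ≤ w := by
    obtain ⟨r, hr⟩ := hne
    obtain ⟨x, hx, hrx⟩ := hr
    have := hwle r ⟨x, hx, hrx⟩
    have h0r : 0 ≤ r := hrx ▸ norm_nonneg _
    linarith
  have hM : ∀ x, aNorm A x = 1 → ‖aInner A (T x) x‖ ≤ w :=
    fun x hx => hwle _ ⟨x, hx, rfl⟩
  have hM2 := num_bound hA hM
  have hb : ∀ x, aNorm A x = 1 → aNorm A (T x) ≤ 2 * w :=
    fun x hx => normT_bound hA hM2 hw0 hx
  -- the alpha-norm set
  set Sset : Set ℝ := {r | ∃ x, aNorm A x = 1 ∧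
    r = Real.sqrt (α * ‖aInner A (T x) x‖ ^ 2
      + (1 - α) * aNorm A (T x) ^ 2)} with hSset
  have hLsup : L = sSup Sset := rfl
  have hSbdd : BddAbove Sset := by
    refine ⟨2 * w, fun r hr => ?_⟩
    obtain ⟨x, hx, hrx⟩ := hr
    have ha := hM x hx
    have hbx := hb x hx
    have ha0 : 0 ≤ ‖aInner A (T x) x‖ := norm_nonneg _
    have hb0 : 0 ≤ aNorm A (T x) := aNorm_nonneg' _
    have ha2 : ‖aInner A (T x) x‖ ^ 2 ≤ (2 * w) ^ 2 := by nlinarith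
    have hb2 : aNorm A (T x) ^ 2 ≤ (2 * w) ^ 2 := by nlinarith
    have hle : α * ‖aInner A (T x) x‖ ^ 2 + (1 - α) * aNorm A (T x) ^ 2
        ≤ (2 * w) ^ 2 := by
      nlinarith [mul_nonneg hα0 (sub_nonneg.mpr ha2),
        mul_nonneg (by linarith : (0:ℝ) ≤ 1 - α) (sub_nonneg.mpr hb2)]
    rw [hrx]
    calc Real.sqrt (α * ‖aInner A (T x) x‖ ^ 2
          + (1 - α) * aNorm A (T x) ^ 2) ≤ Real.sqrt ((2 * w) ^ 2) :=
          Real.sqrt_le_sqrt hle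
      _ = 2 * w := Real.sqrt_sq (by linarith)
  -- the Crawford set is bounded below
  have hCbdd : BddBelow {r | ∃ x, aNorm A x = 1
      ∧ r = ‖aInner A ((S ∘L T) x) x‖} := by
    refine ⟨0, fun r hr => ?_⟩
    obtain ⟨x, _, hrx⟩ := hr
    exact hrx ▸ norm_nonneg _
  -- key pointwise estimate
  have key : ∀ r ∈ Wset, 2 * k * r * Real.sqrt c ≤ L ^ 2 := by
    rintro r ⟨x, hx, hrx⟩
    set a := ‖aInner A (T x) x‖ with haa
    set b := aNorm A (T x) with hbb
    have ha0 : 0 ≤ a := norm_nonneg _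
    have hb0 : 0 ≤ b := aNorm_nonneg' _
    -- b^2 is an element of the Crawford set
    have hST : ‖aInner A ((S ∘L T) x) x‖ = b ^ 2 := by
      have hcomp : A (S (T x)) = (ContinuousLinearMap.adjoint T) (A (T x)) := by
        have := congrArg (fun f : H →L[ℂ] H => f (T x)) hT.1
        simpa using this
      have : aInner A ((S ∘L T) x) x = aInner A (T x) (T x) := by
        rw [aInner, ContinuousLinearMap.comp_apply, hcomp,
          ContinuousLinearMap.adjoint_inner_left, ← aInner]
      rw [this, aInner_self_abs hA, ← aNorm_sq hA]
    have hcb : c ≤ b ^ 2 := by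
      rw [hc, cA]
      exact csInf_le hCbdd ⟨x, hx, hST.symm⟩
    have hscb : Real.sqrt c ≤ b := by
      calc Real.sqrt c ≤ Real.sqrt (b ^ 2) := Real.sqrt_le_sqrt hcb
        _ = b := Real.sqrt_sq hb0
    -- the element of Sset
    have hmem : Real.sqrt (α * a ^ 2 + (1 - α) * b ^ 2) ∈ Sset := ⟨x, hx, rfl⟩
    have hEL : Real.sqrt (α * a ^ 2 + (1 - α) * b ^ 2) ≤ L :=
      hLsup ▸ le_csSup hSbdd hmem
    have hE0 : 0 ≤ α * a ^ 2 + (1 - α) * b ^ 2 := by nlinarith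
    have hL2ge : α * a ^ 2 + (1 - α) * b ^ 2 ≤ L ^ 2 := by
      have := Real.sq_sqrt hE0
      nlinarith [Real.sqrt_nonneg (α * a ^ 2 + (1 - α) * b ^ 2)]
    -- AM-GM
    have hAM : 2 * k * a * b ≤ α * a ^ 2 + (1 - α) * b ^ 2 := by
      have h2 := two_mul_le_add_sq (Real.sqrt α * a) (Real.sqrt (1 - α) * b)
      have hsa : Real.sqrt α ^ 2 = α := Real.sq_sqrt hα0
      have hsb : Real.sqrt (1 - α) ^ 2 = 1 - α := Real.sq_sqrt (by linarith)
      have hks : k = Real.sqrt α * Real.sqrt (1 - α) := by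
        rw [hk, Real.sqrt_mul hα0]
      calc 2 * k * a * b = 2 * (Real.sqrt α * a) * (Real.sqrt (1 - α) * b) := by
            rw [hks]; ring
        _ ≤ (Real.sqrt α * a) ^ 2 + (Real.sqrt (1 - α) * b) ^ 2 := h2
        _ = α * a ^ 2 + (1 - α) * b ^ 2 := by rw [mul_pow, mul_pow, hsa, hsb]
    have hstep : 2 * k * a * Real.sqrt c ≤ 2 * k * a * b := by
      have : 0 ≤ 2 * k * a := by positivity
      exact mul_le_mul_of_nonneg_left hscb this
    rw [hrx] at *
    calc 2 * k * ‖aInner A (T x) x‖ * Real.sqrt c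
        ≤ 2 * k * ‖aInner A (T x) x‖ * b := hstep
      _ ≤ α * ‖aInner A (T x) x‖ ^ 2 + (1 - α) * b ^ 2 := hAM
      _ ≤ L ^ 2 := hL2ge
  -- conclude
  have hpos : (0:ℝ) < 2 * k * Real.sqrt c := by positivity
  have hwle2 : w ≤ L ^ 2 / (2 * k * Real.sqrt c) := by
    rw [hwsup]
    refine Real.sSup_le (fun r hr => ?_) (div_nonneg hL2 hpos.le)
    rw [le_div_iff₀ hpos]
    calc r * (2 * k * Real.sqrt c) = 2 * k * r * Real.sqrt c := by ring
      _ ≤ L ^ 2 := key r hr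
  rw [ge_iff_le]
  calc 2 * k * w * Real.sqrt c = w * (2 * k * Real.sqrt c) := by ring
    _ ≤ L ^ 2 / (2 * k * Real.sqrt c) * (2 * k * Real.sqrt c) :=
        mul_le_mul_of_nonneg_right hwle2 hpos.le
    _ = L ^ 2 := div_mul_cancel₀ _ hpos.ne'
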